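/- For any string T of length n ≥ 2 over an alphabet with σ distinct letters occurring in T, el(T) ≤ (2n/σ) · er(T); i.e., σ · el(T) ≤ 2n · er(T). -/

import Mathlib

open Finset

variable {α : Type*}

/-- Number of occurrences of `S` in `T`: positions `i` with `T[i..i+|S|-1] = S`. -/
def occ [DecidableEq α] (T S : List α) : ℕ :=
  ((Finset.range (T.length + 1)).filter fun i => (T.drop i).take S.length = S).card

/-- `S` is a maximal repeat of `T`. -/
def MaxRepeat [DecidableEq α] (T S : List α) : Prop :=
  2 ≤ occ T S ∧ ∀ a : α, occ T (a :: S) < occ T S ∧ occ T (S ++ [a]) < occ T S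

instance [DecidableEq α] [Fintype α] (T S : List α) : Decidable (MaxRepeat T S) := by
  unfold MaxRepeat; infer_instance

/-- The finite set of maximal repeats of `T`. -/
def MRset [DecidableEq α] [Fintype α] (T : List α) : Finset (List α) :=
  (T.tails.flatMap List.inits).toFinset.filter fun S => MaxRepeat T S

/-- Number of right extensions of `S` in `T`. -/
def rext [DecidableEq α] [Fintype α] (T S : List α) : ℕ :=
  (Finset.univ.filter fun a : α => (S ++ [a]) <:+: T).card

/-- Number of left extensions of `S` in `T`. -/
def lext [DecidableEq α] [Fintype α] (T S : List α) : ℕ :=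
  (Finset.univ.filter fun a : α => (a :: S) <:+: T).card

/-- Total number of right extensions of maximal repeats of `T`. -/
def er [DecidableEq α] [Fintype α] (T : List α) : ℕ := ∑ S ∈ MRset T, rext T S

/-- Total number of left extensions of maximal repeats of `T`. -/
def el [DecidableEq α] [Fintype α] (T : List α) : ℕ := ∑ S ∈ MRset T, lext T S

/-! ### Auxiliary lemmas -/

section Aux

variable [DecidableEq α]

set_option linter.unusedSectionVars false

lemma maxrep_of_mem_MRset [Fintype α] {T S : List α} (h : S ∈ MRset T) : MaxRepeat T S :=
  (Finset.mem_filter.mp h).2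

/-- shorter of two suffixes of the same list is a suffix of the longer -/
lemma suffix_of_suffix_length_le {l1 l2 l3 : List α} (h1 : l1 <:+ l3) (h2 : l2 <:+ l3)
    (h : l1.length ≤ l2.length) : l1 <:+ l2 := by
  have e1 : l1 = l3.drop (l3.length - l1.length) := List.suffix_iff_eq_drop.mp h1
  have e2 : l2 = l3.drop (l3.length - l2.length) := List.suffix_iff_eq_drop.mp h2
  have hl2 : l2.length ≤ l3.length := h2.length_le
  rw [e1, e2, show l3.length - l1.length
      = (l3.length - l2.length) + (l2.length - l1.length) by omega, ← List.drop_drop]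
  exact List.drop_suffix _ _

/-- The set of end positions of occurrences of `w` in `T`. -/
def Ends (T w : List α) : Finset ℕ :=
  (Finset.range (T.length + 1)).filter fun j => w <:+ T.take j

lemma mem_Ends_iff {T w : List α} {j : ℕ} :
    j ∈ Ends T w ↔ j ≤ T.length ∧ w <:+ T.take j := by
  simp [Ends, Nat.lt_succ_iff]

lemma length_constraint {T w : List α} {i : ℕ}
    (h : (T.drop i).take w.length = w) (hi : i ≤ T.length) : i + w.length ≤ T.length := by
  have := congrArg List.length h
  simp only [List.length_take, List.length_drop] at this
  omega

lemma drop_take_eq_iff {T w : List α} {i : ℕ} (hi : i + w.length ≤ T.length) :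
    (T.drop i).take w.length = w ↔ w <:+ T.take (i + w.length) := by
  rw [List.take_add]
  constructor
  · intro h; rw [h]; exact List.suffix_append _ _
  · rintro ⟨t, ht⟩
    have hlen : ((T.drop i).take w.length).length = w.length := by
      simp only [List.length_take, List.length_drop]; omega
    exact ((List.append_inj' ht (by omega)).2).symm

lemma occ_eq_card_Ends (T w : List α) : occ T w = (Ends T w).card := by
  classical
  unfold occ Ends
  apply Finset.card_bij (fun i _ => i + w.length)
  · intro i hi
    rw [Finset.mem_filter, Finset.mem_range, Nat.lt_succ_iff] at hi
    have hle : i + w.length ≤ T.length := length_constraint hi.2 hi.1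
    rw [Finset.mem_filter, Finset.mem_range, Nat.lt_succ_iff]
    exact ⟨hle, (drop_take_eq_iff hle).mp hi.2⟩
  · intro i _ i' _ hii; omega
  · intro j hj
    rw [Finset.mem_filter, Finset.mem_range, Nat.lt_succ_iff] at hj
    have hwj : w.length ≤ j := by
      have := hj.2.length_le
      rw [List.length_take] at this
      omega
    refine ⟨j - w.length, ?_, by omega⟩
    rw [Finset.mem_filter, Finset.mem_range, Nat.lt_succ_iff]
    have hle : (j - w.length) + w.length ≤ T.length := by omega
    refine ⟨by omega, (drop_take_eq_iff hle).mpr ?_⟩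
    rw [show j - w.length + w.length = j by omega]
    exact hj.2

lemma Ends_nonempty {T w : List α} (h : w <:+: T) : (Ends T w).Nonempty := by
  obtain ⟨s, t, rfl⟩ := h
  refine ⟨s.length + w.length, mem_Ends_iff.mpr ⟨by simp, ?_⟩⟩
  rw [← List.length_append, List.take_left]
  exact List.suffix_append _ _

lemma Ends_mono {T u v : List α} (h : u <:+ v) : Ends T v ⊆ Ends T u := by
  intro j hj
  rw [mem_Ends_iff] at hj ⊢
  exact ⟨hj.1, h.trans hj.2⟩

lemma zero_not_mem_Ends {T : List α} {a : α} {S : List α} : 0 ∉ Ends T (a :: S) := by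
  intro h
  have := (mem_Ends_iff.mp h).2
  simp at this

/-- key injectivity step -/
lemma ends_inj_aux [Fintype α] {T S S' : List α} {a a' : α}
    (hS' : S' ∈ MRset T) (hinf : (a :: S) <:+: T)
    (he : Ends T (a :: S) = Ends T (a' :: S'))
    (hlen : (a :: S).length ≤ (a' :: S').length) :
    a :: S = a' :: S' := by
  obtain ⟨j, hj⟩ := Ends_nonempty hinf
  have hj' : j ∈ Ends T (a' :: S') := he ▸ hj
  rw [mem_Ends_iff] at hj hj'
  have hsuf : (a :: S) <:+ (a' :: S') := suffix_of_suffix_length_le hj.2 hj'.2 hlen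
  by_contra hne
  obtain ⟨t, ht⟩ := hsuf
  have hsufS' : (a :: S) <:+ S' := by
    cases t with
    | nil => exact absurd ht hne
    | cons b t' =>
      rw [List.cons_append] at ht
      exact ⟨t', by injection ht⟩
  have h1 : Ends T S' ⊆ Ends T (a :: S) := Ends_mono hsufS'
  have h2 : Ends T (a' :: S') ⊆ Ends T S' := Ends_mono (List.suffix_cons a' S')
  have heq : Ends T S' = Ends T (a' :: S') :=
    subset_antisymm (he ▸ h1) h2
  have hocc : occ T S' = occ T (a' :: S') := by
    rw [occ_eq_card_Ends, occ_eq_card_Ends, heq]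
  have := ((maxrep_of_mem_MRset hS').2 a').1
  omega

/-! ### Laminar family bound -/

lemma laminar_bound (U : Finset ℕ) (F : Finset (Finset ℕ))
    (hne : ∀ A ∈ F, A.Nonempty) (hsub : ∀ A ∈ F, A ⊆ U)
    (hlam : ∀ A ∈ F, ∀ B ∈ F, A ⊆ B ∨ B ⊆ A ∨ Disjoint A B) :
    F.card ≤ 2 * U.card := by
  classical
  -- the minimum of a member, as an element
  have hmin : ∀ A ∈ F, ∃ x : ℕ, A.min = (x : WithTop ℕ) ∧ x ∈ A := by
    intro A hA
    obtain ⟨x, hx⟩ := Finset.min_of_nonempty (hne A hA)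
    exact ⟨x, hx, Finset.mem_of_min hx⟩
  -- members sharing a point are nested
  have hnest : ∀ A ∈ F, ∀ B ∈ F, ∀ x : ℕ, x ∈ A → x ∈ B → A ⊆ B ∨ B ⊆ A := by
    intro A hA B hB x hxA hxB
    rcases hlam A hA B hB with h | h | h
    · exact Or.inl h
    · exact Or.inr h
    · exact ((Finset.not_disjoint_iff.mpr ⟨x, hxA, hxB⟩) h).elim
  set F0 := F.filter (fun A => ∀ B ∈ F, B ⊆ A → B.min = A.min → B = A) with hF0
  set F1 := F.filter (fun A => ¬ ∀ B ∈ F, B ⊆ A → B.min = A.min → B = A) with hF1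
  have hsplit : F0.card + F1.card = F.card := Finset.card_filter_add_card_filter_not _
  -- bound F0
  have hbound0 : F0.card ≤ U.card := by
    have hinj0 : Set.InjOn (fun A : Finset ℕ => A.min) F0 := by
      intro A hA B hB hAB
      rw [Finset.mem_coe, hF0, Finset.mem_filter] at hA hB
      obtain ⟨x, hx1, hx2⟩ := hmin A hA.1
      have hxB : x ∈ B := Finset.mem_of_min
        (by rw [← show A.min = B.min from hAB]; exact hx1)
      rcases hnest A hA.1 B hB.1 x hx2 hxB with h | h
      · exact hB.2 A hA.1 h hAB
      · exact (hA.2 B hB.1 h hAB.symm).symm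
    calc F0.card = (F0.image (fun A => A.min)).card :=
          (Finset.card_image_of_injOn hinj0).symm
      _ ≤ (U.image (fun x : ℕ => (x : WithTop ℕ))).card := by
          apply Finset.card_le_card
          intro v hv
          obtain ⟨A, hA, rfl⟩ := Finset.mem_image.mp hv
          rw [hF0, Finset.mem_filter] at hA
          obtain ⟨x, hx1, hx2⟩ := hmin A hA.1
          exact Finset.mem_image.mpr ⟨x, hsub A hA.1 hx2, hx1.symm⟩
      _ = U.card := Finset.card_image_of_injective _ (fun a b => by simp)
  -- choose the predecessor of each non-chain-minimal member
  have hch : ∀ A : Finset ℕ, ∃ B0 : Finset ℕ, A ∈ F1 →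
      (B0 ∈ F ∧ B0 ⊂ A ∧ B0.min = A.min ∧
        ∀ B ∈ F, B ⊂ A → B.min = A.min → B ⊆ B0) := by
    intro A
    by_cases hA : A ∈ F1
    · rw [hF1, Finset.mem_filter] at hA
      obtain ⟨hAF, hnP⟩ := hA
      push_neg at hnP
      obtain ⟨B1, hB1F, hB1sub, hB1min, hB1ne⟩ := hnP
      -- the chain of strict subsets of A with the same min
      set C := F.filter (fun B => B ⊂ A ∧ B.min = A.min) with hC
      have hCne : C.Nonempty := ⟨B1, by
        rw [hC, Finset.mem_filter]
        exact ⟨hB1F, ssubset_of_subset_of_ne hB1sub hB1ne, hB1min⟩⟩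
      obtain ⟨B0, hB0C, hB0max⟩ := Finset.exists_maximal hCne
      rw [hC, Finset.mem_filter] at hB0C
      refine ⟨B0, fun _ => ⟨hB0C.1, hB0C.2.1, hB0C.2.2, ?_⟩⟩
      intro B hBF hBsub hBmin
      have hBC : B ∈ C := by rw [hC, Finset.mem_filter]; exact ⟨hBF, hBsub, hBmin⟩
      obtain ⟨x, hx1, hx2⟩ := hmin B hBF
      have hxB0 : x ∈ B0 := Finset.mem_of_min (by rw [hB0C.2.2, ← hBmin]; exact hx1)
      rcases hnest B hBF B0 hB0C.1 x hx2 hxB0 with h | h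
      · exact h
      · rcases eq_or_ssubset_of_subset h with h' | h'
        · exact h' ▸ Finset.Subset.refl _
        · exact absurd (hB0max hBC h) (not_subset_of_ssubset h')
    · exact ⟨∅, fun h => absurd h hA⟩
  choose g hg using hch
  -- bound F1
  have hbound1 : F1.card ≤ U.card := by
    have hF1F : ∀ A ∈ F1, A ∈ F := fun A hA => (Finset.mem_filter.mp hA).1
    -- the difference A \ g A is nonempty
    have hdiffne : ∀ A ∈ F1, (A \ g A).Nonempty := by
      intro A hA
      obtain ⟨x, hx1, hx2⟩ := Finset.exists_of_ssubset (hg A hA).2.1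
      exact ⟨x, Finset.mem_sdiff.mpr ⟨hx1, hx2⟩⟩
    -- key asymmetric step
    have key : ∀ A ∈ F1, ∀ A' ∈ F1, A ⊆ A' → A ≠ A' →
        (A \ g A).min = (A' \ g A').min → False := by
      intro A hA A' hA' hsub' hne' hmineq
      obtain ⟨hgF, hgss, hgmin, hgmax⟩ := hg A hA
      obtain ⟨hgF', hgss', hgmin', hgmax'⟩ := hg A' hA'
      obtain ⟨y, hy1⟩ := Finset.min_of_nonempty (hdiffne A hA)
      have hy2 : y ∈ A \ g A := Finset.mem_of_min hy1
      have hy2' : y ∈ A' \ g A' := Finset.mem_of_min (by rw [← hmineq]; exact hy1)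
      rw [Finset.mem_sdiff] at hy2 hy2'
      by_cases hmm : A.min = A'.min
      · -- same chain: A ⊆ g A'
        have : A ⊆ g A' := hgmax' A (hF1F A hA) (ssubset_of_subset_of_ne hsub' hne') hmm
        exact hy2'.2 (this hy2.1)
      · -- different minima
        obtain ⟨x, hx1, hx2⟩ := hmin A (hF1F A hA)
        have hxgA : x ∈ g A := Finset.mem_of_min (by rw [hgmin]; exact hx1)
        -- y > x
        have hxy : (x : WithTop ℕ) < (y : WithTop ℕ) := by
          have h1 : A.min ≤ (y : WithTop ℕ) := Finset.min_le hy2.1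
          rw [hx1] at h1
          rcases lt_or_eq_of_le h1 with h | h
          · exact h
          · have hxy' : x = y := by exact_mod_cast h
            exact absurd (hxy' ▸ hxgA) hy2.2
        -- x ∉ g A'
        have hxgA' : x ∉ g A' := by
          intro hxin
          rcases hnest A (hF1F A hA) (g A') hgF' x hx2 hxin with h | h
          · exact hy2'.2 (h hy2.1)
          · -- g A' ⊆ A, so min A ≤ min (g A') = min A' ≤ min A forces equality
            obtain ⟨x', hx'1, hx'2⟩ := hmin (g A') hgF'
            have hx'A : x' ∈ A := h hx'2
            have h1 : A.min ≤ (x' : WithTop ℕ) := Finset.min_le hx'A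
            have h2 : A'.min ≤ A.min := by
              rw [hx1]; exact Finset.min_le (hsub' hx2)
            have h3 : (x' : WithTop ℕ) = A'.min := by rw [← hx'1, hgmin']
            rw [h3] at h1
            exact hmm (le_antisymm h1 h2)
        -- then x ∈ A' \ g A', so min ≤ x, contradiction with y > x
        have hxdiff : x ∈ A' \ g A' := Finset.mem_sdiff.mpr ⟨hsub' hx2, hxgA'⟩
        have : (A' \ g A').min ≤ (x : WithTop ℕ) := Finset.min_le hxdiff
        rw [← hmineq, hy1] at this
        exact absurd this (not_le.mpr hxy)
    have hinj1 : Set.InjOn (fun A : Finset ℕ => (A \ g A).min) F1 := by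
      intro A hA B hB hAB
      simp only [Finset.mem_coe] at hA hB
      by_contra hne'
      obtain ⟨y, hy1⟩ := Finset.min_of_nonempty (hdiffne A hA)
      have hy2 : y ∈ A \ g A := Finset.mem_of_min hy1
      have hy2' : y ∈ B \ g B := Finset.mem_of_min
        (by rw [← show (A \ g A).min = (B \ g B).min from hAB]; exact hy1)
      rw [Finset.mem_sdiff] at hy2 hy2'
      rcases hnest A ((Finset.mem_filter.mp hA).1) B ((Finset.mem_filter.mp hB).1)
          y hy2.1 hy2'.1 with h | h
      · exact key A hA B hB h hne' hAB
      · exact key B hB A hA h (Ne.symm hne') hAB.symm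
    calc F1.card = (F1.image (fun A => (A \ g A).min)).card :=
          (Finset.card_image_of_injOn hinj1).symm
      _ ≤ (U.image (fun x : ℕ => (x : WithTop ℕ))).card := by
          apply Finset.card_le_card
          intro v hv
          obtain ⟨A, hA, rfl⟩ := Finset.mem_image.mp hv
          obtain ⟨y, hy1⟩ := Finset.min_of_nonempty (hdiffne A hA)
          have hy2 : y ∈ A \ g A := Finset.mem_of_min hy1
          have hyU : y ∈ U := hsub A ((Finset.mem_filter.mp hA).1)
            (Finset.mem_sdiff.mp hy2).1
          exact Finset.mem_image.mpr ⟨y, hyU, hy1.symm⟩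
      _ = U.card := Finset.card_image_of_injective _ (fun a b => by simp)
  omega

/-! ### el T ≤ 2 n -/

lemma el_le_two_mul_length [Fintype α] (T : List α) : el T ≤ 2 * T.length := by
  classical
  set D := (MRset T).sigma (fun S => Finset.univ.filter fun a : α => (a :: S) <:+: T) with hD
  have hel : el T = D.card := by
    rw [hD, Finset.card_sigma]; rfl
  set φ : (Σ _ : List α, α) → Finset ℕ := fun p => Ends T (p.2 :: p.1) with hφ
  have hmemD : ∀ p ∈ D, p.1 ∈ MRset T ∧ (p.2 :: p.1) <:+: T := by
    intro p hp
    rw [hD, Finset.mem_sigma, Finset.mem_filter] at hp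
    exact ⟨hp.1, hp.2.2⟩
  have hinj : Set.InjOn φ D := by
    intro p hp q hq hpq
    simp only [Finset.mem_coe] at hp hq
    obtain ⟨hp1, hp2⟩ := hmemD p hp
    obtain ⟨hq1, hq2⟩ := hmemD q hq
    have : p.2 :: p.1 = q.2 :: q.1 := by
      rcases le_total (p.2 :: p.1).length (q.2 :: q.1).length with h | h
      · exact ends_inj_aux hq1 hp2 hpq h
      · exact (ends_inj_aux hp1 hq2 hpq.symm h).symm
    obtain ⟨p1, p2⟩ := p
    obtain ⟨q1, q2⟩ := q
    simp only [List.cons.injEq] at this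
    simp [this.1, this.2]
  have hcard : D.card = (D.image φ).card := (Finset.card_image_of_injOn hinj).symm
  set U := (Finset.range (T.length + 1)).erase 0 with hU
  have hUcard : U.card = T.length := by
    rw [hU, Finset.card_erase_of_mem (by simp), Finset.card_range]
    omega
  have hbound : (D.image φ).card ≤ 2 * U.card := by
    apply laminar_bound
    · intro A hA
      obtain ⟨p, hp, rfl⟩ := Finset.mem_image.mp hA
      exact Ends_nonempty (hmemD p hp).2
    · intro A hA
      obtain ⟨p, hp, rfl⟩ := Finset.mem_image.mp hA
      intro j hj
      rw [hU, Finset.mem_erase, Finset.mem_range]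
      refine ⟨?_, Nat.lt_succ_of_le (mem_Ends_iff.mp hj).1⟩
      intro h0
      exact zero_not_mem_Ends (h0 ▸ hj)
    · intro A hA B hB
      obtain ⟨p, hp, rfl⟩ := Finset.mem_image.mp hA
      obtain ⟨q, hq, rfl⟩ := Finset.mem_image.mp hB
      by_cases hd : Disjoint (φ p) (φ q)
      · exact Or.inr (Or.inr hd)
      · obtain ⟨j, hj1, hj2⟩ := Finset.not_disjoint_iff.mp hd
        rw [hφ] at hj1 hj2 ⊢
        have h1 := (mem_Ends_iff.mp hj1).2
        have h2 := (mem_Ends_iff.mp hj2).2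
        rcases le_total (p.2 :: p.1).length (q.2 :: q.1).length with h | h
        · exact Or.inr (Or.inl (Ends_mono (suffix_of_suffix_length_le h1 h2 h)))
        · exact Or.inl (Ends_mono (suffix_of_suffix_length_le h2 h1 h))
  omega

/-! ### er T ≥ σ -/

lemma occ_nil (T : List α) : occ T [] = T.length + 1 := by
  unfold occ
  simp

lemma occ_single_le (T : List α) (a : α) : occ T [a] ≤ T.length := by
  unfold occ
  calc ((Finset.range (T.length + 1)).filter fun i => (T.drop i).take 1 = [a]).card
      ≤ ((Finset.range (T.length + 1)).erase T.length).card := by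
        apply Finset.card_le_card
        intro i hi
        rw [Finset.mem_filter] at hi
        rw [Finset.mem_erase]
        refine ⟨?_, hi.1⟩
        intro h
        have := hi.2
        rw [h] at this
        simp at this
    _ = T.length := by
        rw [Finset.card_erase_of_mem (by simp), Finset.card_range]
        omega

lemma nil_mem_MRset [Fintype α] (T : List α) (h : 2 ≤ T.length) : [] ∈ MRset T := by
  unfold MRset
  rw [Finset.mem_filter]
  refine ⟨?_, ?_, ?_⟩
  · rw [List.mem_toFinset, List.mem_flatMap]
    exact ⟨[], by simp, by simp⟩
  · rw [occ_nil]; omega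
  · intro a
    have h1 := occ_single_le T a
    have h2 := occ_nil T
    constructor
    · show occ T [a] < occ T []
      omega
    · show occ T [a] < occ T []
      omega

lemma singleton_infix_iff {a : α} {l : List α} : [a] <:+: l ↔ a ∈ l := by
  constructor
  · intro h
    exact h.sublist.mem (by simp)
  · intro h
    obtain ⟨s, t, rfl⟩ := List.append_of_mem h
    exact ⟨s, t, by simp⟩

lemma rext_nil [Fintype α] (T : List α) : rext T [] = T.toFinset.card := by
  unfold rext
  congr 1
  ext a
  simp [singleton_infix_iff]

lemma card_le_er [Fintype α] (T : List α) (h : 2 ≤ T.length) : T.toFinset.card ≤ er T := by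
  rw [← rext_nil]
  exact Finset.single_le_sum (fun S _ => Nat.zero_le _) (nil_mem_MRset T h)

end Aux

/-- `σ · el(T) ≤ 2n · er(T)`. -/
theorem sigma_el_le_two_n_er [DecidableEq α] [Fintype α] (T : List α) (h : 2 ≤ T.length) :
    T.toFinset.card * el T ≤ 2 * T.length * er T := by
  calc T.toFinset.card * el T ≤ T.toFinset.card * (2 * T.length) :=
        Nat.mul_le_mul_left _ (el_le_two_mul_length T)
    _ = 2 * T.length * T.toFinset.card := Nat.mul_comm _ _
    _ ≤ 2 * T.length * er T := Nat.mul_le_mul_left _ (card_le_er T h)
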